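/- Let f, g ∈ ℝ[x,y] and ξ ∈ ℝ² nonzero. Suppose the face Δ_f^ξ of the Newton polygon of f is a single point α, the face Δ_g^ξ is a single point β, the vectors α and β are linearly independent over ℝ, and at least one coordinate of α + β is even. Then Jac(f,g) attains both positive and negative values on ℝ². -/

import Mathlib

open MvPolynomial

noncomputable def Jac (f g : MvPolynomial (Fin 2) ℝ) : MvPolynomial (Fin 2) ℝ :=
  pderiv 0 f * pderiv 1 g - pderiv 1 f * pderiv 0 g

open Classical in
/-- The set of exponent vectors of `h` maximizing `⟨ξ, ·⟩` over the support
(the lattice points of the face `Δ_h^ξ` lying in the support of `h`). -/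
noncomputable def faceSupport (ξ : ℝ × ℝ) (h : MvPolynomial (Fin 2) ℝ) :
    Finset (Fin 2 →₀ ℕ) :=
  h.support.filter (fun m => ∀ m' ∈ h.support,
      ξ.1 * (m' 0 : ℝ) + ξ.2 * (m' 1 : ℝ) ≤ ξ.1 * (m 0 : ℝ) + ξ.2 * (m 1 : ℝ))

section Aux

open Filter Topology

/-- The `ξ`-weight of an exponent vector. -/
noncomputable def wt (ξ : ℝ × ℝ) (m : Fin 2 →₀ ℕ) : ℝ := ξ.1 * (m 0 : ℝ) + ξ.2 * (m 1 : ℝ)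

/-- `ξ` as a function on `Fin 2`. -/
noncomputable def xiv (ξ : ℝ × ℝ) : Fin 2 → ℝ := ![ξ.1, ξ.2]

lemma face_spec {ξ : ℝ × ℝ} {h : MvPolynomial (Fin 2) ℝ} {γ : Fin 2 →₀ ℕ}
    (hfs : faceSupport ξ h = {γ}) :
    γ ∈ h.support ∧ (∀ m ∈ h.support, wt ξ m ≤ wt ξ γ) ∧
      (∀ m ∈ h.support, m ≠ γ → wt ξ m < wt ξ γ) := by
  classical
  have hγ : γ ∈ faceSupport ξ h := by rw [hfs]; exact Finset.mem_singleton_self γ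
  simp only [faceSupport, Finset.mem_filter] at hγ
  obtain ⟨hmem, hmax⟩ := hγ
  refine ⟨hmem, fun m hm => hmax m hm, fun m hm hne => ?_⟩
  rcases (hmax m hm).lt_or_eq with hlt | heq
  · exact hlt
  · exfalso; apply hne
    have hmm : m ∈ faceSupport ξ h := by
      simp only [faceSupport, Finset.mem_filter]
      exact ⟨hm, fun m' hm' => (hmax m' hm').trans heq.ge⟩
    rw [hfs] at hmm
    exact Finset.mem_singleton.mp hmm

lemma eval_pderiv_sum (h : MvPolynomial (Fin 2) ℝ) (i : Fin 2) (p : Fin 2 → ℝ) :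
    eval p (pderiv i h) = ∑ m ∈ h.support,
      (coeff m h * (m i : ℝ)) * ∏ j : Fin 2, p j ^ ((m - Finsupp.single i 1 : Fin 2 →₀ ℕ) j) := by
  conv_lhs => rw [← support_sum_monomial_coeff h]
  rw [map_sum, map_sum]
  refine Finset.sum_congr rfl fun m hm => ?_
  rw [pderiv_monomial, eval_monomial, Finsupp.prod_pow]

lemma wt_sub_single {ξ : ℝ × ℝ} {m : Fin 2 →₀ ℕ} {i : Fin 2} (hmi : 1 ≤ m i) :
    wt ξ (m - Finsupp.single i 1) = wt ξ m - xiv ξ i := by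
  have hj : ∀ j : Fin 2, (((m - Finsupp.single i 1 : Fin 2 →₀ ℕ) j : ℕ) : ℝ)
      = (m j : ℝ) - ((Finsupp.single i 1 : Fin 2 →₀ ℕ) j : ℝ) := by
    intro j
    rw [Finsupp.tsub_apply, Nat.cast_sub]
    by_cases hij : i = j
    · subst hij; simpa using hmi
    · simp [Finsupp.single_apply, hij]
  simp only [wt, hj]
  fin_cases i <;> simp [xiv, Finsupp.single_apply] <;> ring

lemma term_tendsto {C d : ℝ} (h : C = 0 ∨ d ≤ 0) :
    Tendsto (fun t : ℝ => C * t ^ d) atTop (𝓝 (if d = 0 then C else 0)) := by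
  rcases h with hC | hd
  · subst hC; simpa using tendsto_const_nhds
  · rcases hd.lt_or_eq with hneg | h0
    · rw [if_neg hneg.ne]
      have h1 : Tendsto (fun x : ℝ => x ^ d) atTop (𝓝 0) := by
        have := tendsto_rpow_neg_atTop (y := -d) (by linarith)
        simpa using this
      simpa using h1.const_mul C
    · subst h0; simpa [Real.rpow_zero] using tendsto_const_nhds

lemma eval_term_prod {σ : Fin 2 → ℝ} {ξ : ℝ × ℝ} {t : ℝ} (ht : 0 < t) (n : Fin 2 →₀ ℕ) :
    ∏ j : Fin 2, (σ j * t ^ xiv ξ j) ^ (n j) = σ 0 ^ n 0 * σ 1 ^ n 1 * t ^ wt ξ n := by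
  have hp : ∀ (x : ℝ) (k : ℕ), (t ^ x) ^ k = t ^ (x * k) := by
    intro x k
    rw [← Real.rpow_natCast (t ^ x) k, ← Real.rpow_mul ht.le]
  rw [Fin.prod_univ_two, mul_pow, mul_pow, hp, hp]
  simp only [xiv, Matrix.cons_val_zero, Matrix.cons_val_one, Matrix.head_cons, wt]
  rw [Real.rpow_add ht]
  ring

lemma face_tendsto {ξ : ℝ × ℝ} {h : MvPolynomial (Fin 2) ℝ} {γ : Fin 2 →₀ ℕ}
    (hmem : γ ∈ h.support) (hle : ∀ m ∈ h.support, wt ξ m ≤ wt ξ γ)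
    (hlt : ∀ m ∈ h.support, m ≠ γ → wt ξ m < wt ξ γ) (σ : Fin 2 → ℝ) (i : Fin 2) :
    Tendsto (fun t : ℝ => t ^ (-(wt ξ γ - xiv ξ i)) *
        eval (fun j => σ j * t ^ xiv ξ j) (pderiv i h)) atTop
      (𝓝 (coeff γ h * (γ i : ℝ) * σ 0 ^ ((γ - Finsupp.single i 1 : Fin 2 →₀ ℕ) 0) *
          σ 1 ^ ((γ - Finsupp.single i 1 : Fin 2 →₀ ℕ) 1))) := by
  set c := wt ξ γ - xiv ξ i with hc
  set Tgt := fun m : Fin 2 →₀ ℕ => coeff m h * (m i : ℝ) *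
      σ 0 ^ ((m - Finsupp.single i 1 : Fin 2 →₀ ℕ) 0) *
      σ 1 ^ ((m - Finsupp.single i 1 : Fin 2 →₀ ℕ) 1) with hTgt
  have hsum : Tendsto (fun t : ℝ => ∑ m ∈ h.support,
      Tgt m * t ^ (wt ξ (m - Finsupp.single i 1) - c)) atTop
      (𝓝 (∑ m ∈ h.support, if m = γ then Tgt m else 0)) := by
    refine tendsto_finset_sum _ (fun m hm => ?_)
    by_cases hmγ : m = γ
    · subst hmγ
      rw [if_pos rfl]
      by_cases hγi : 1 ≤ m i
      · have hd : wt ξ (m - Finsupp.single i 1) - c = 0 := by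
          rw [wt_sub_single hγi, hc]; ring
        rw [hd]
        simpa [Real.rpow_zero] using tendsto_const_nhds
      · have h0 : m i = 0 := by omega
        have hT0 : Tgt m = 0 := by simp [hTgt, h0]
        rw [hT0]
        simpa using tendsto_const_nhds
    · rw [if_neg hmγ]
      by_cases hmi : 1 ≤ m i
      · have hd : wt ξ (m - Finsupp.single i 1) - c < 0 := by
          rw [wt_sub_single hmi, hc]
          have := hlt m hm hmγ
          linarith
        simpa [hd.ne] using term_tendsto (C := Tgt m) (Or.inr hd.le)
      · have h0 : m i = 0 := by omega
        have hT0 : Tgt m = 0 := by simp [hTgt, h0]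
        rw [hT0]
        simpa using tendsto_const_nhds
  have hcollapse : (∑ m ∈ h.support, if m = γ then Tgt m else 0) = Tgt γ := by
    rw [Finset.sum_ite_eq' h.support γ Tgt, if_pos hmem]
  rw [hcollapse] at hsum
  refine hsum.congr' ?_
  filter_upwards [eventually_gt_atTop 0] with t ht
  rw [eval_pderiv_sum, Finset.mul_sum]
  refine Finset.sum_congr rfl fun m hm => ?_
  rw [eval_term_prod ht]
  rw [show wt ξ (m - Finsupp.single i 1) - c = -c + wt ξ (m - Finsupp.single i 1) by ring,
    Real.rpow_add ht]
  simp only [hTgt]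
  ring

lemma det_ne_zero_of_li (α β : Fin 2 →₀ ℕ)
    (hind : LinearIndependent ℝ ![(fun i => (α i : ℝ) : Fin 2 → ℝ),
                                  (fun i => (β i : ℝ) : Fin 2 → ℝ)]) :
    (α 0 : ℝ) * (β 1 : ℝ) - (α 1 : ℝ) * (β 0 : ℝ) ≠ 0 := by
  intro h0
  have hli := Fintype.linearIndependent_iff.mp hind
  by_cases hz : α 0 = 0 ∧ α 1 = 0
  · have h1 : (∑ i : Fin 2, (![(1:ℝ), 0] i) • (![(fun i => (α i : ℝ) : Fin 2 → ℝ),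
        (fun i => (β i : ℝ) : Fin 2 → ℝ)] i)) = 0 := by
      funext j
      simp only [Fin.sum_univ_two, Pi.add_apply, Pi.smul_apply, smul_eq_mul,
        Matrix.cons_val_zero, Matrix.cons_val_one, Matrix.head_cons, Pi.zero_apply]
      fin_cases j <;> simp [hz.1, hz.2]
    have := hli ![1, 0] h1 0
    simp at this
  · have h1 : (∑ i : Fin 2, (![(β 0 : ℝ) + β 1, -((α 0 : ℝ) + α 1)] i) •
        (![(fun i => (α i : ℝ) : Fin 2 → ℝ), (fun i => (β i : ℝ) : Fin 2 → ℝ)] i)) = 0 := by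
      funext j
      simp only [Fin.sum_univ_two, Pi.add_apply, Pi.smul_apply, smul_eq_mul,
        Matrix.cons_val_zero, Matrix.cons_val_one, Matrix.head_cons, Pi.zero_apply]
      fin_cases j
      · simp
        linear_combination h0
      · simp
        linear_combination -h0
    have h2 := hli ![(β 0 : ℝ) + β 1, -((α 0 : ℝ) + α 1)] h1 1
    simp only [Matrix.cons_val_one, Matrix.head_cons, Matrix.cons_val_zero, neg_eq_zero] at h2
    have n0 : (0:ℝ) ≤ α 0 := Nat.cast_nonneg _
    have n1 : (0:ℝ) ≤ α 1 := Nat.cast_nonneg _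
    exact hz ⟨by exact_mod_cast (by linarith : (α 0:ℝ) = 0),
      by exact_mod_cast (by linarith : (α 1:ℝ) = 0)⟩

end Aux

open Filter Topology in
open Classical in
theorem jac_changes_sign_of_vertices (f g : MvPolynomial (Fin 2) ℝ)
    (ξ : ℝ × ℝ) (hξ : ξ ≠ 0) (α β : Fin 2 →₀ ℕ)
    (hα : faceSupport ξ f = {α}) (hβ : faceSupport ξ g = {β})
    (hind : LinearIndependent ℝ ![(fun i => (α i : ℝ) : Fin 2 → ℝ),
                                  (fun i => (β i : ℝ) : Fin 2 → ℝ)])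
    (heven : Even (α 0 + β 0) ∨ Even (α 1 + β 1)) :
    (∃ p : Fin 2 → ℝ, 0 < eval p (Jac f g)) ∧
    (∃ q : Fin 2 → ℝ, eval q (Jac f g) < 0) := by
  obtain ⟨hαmem, hαle, hαlt⟩ := face_spec hα
  obtain ⟨hβmem, hβle, hβlt⟩ := face_spec hβ
  set a := coeff α f with ha_def
  set b := coeff β g with hb_def
  have ha : a ≠ 0 := mem_support_iff.mp hαmem
  have hb : b ≠ 0 := mem_support_iff.mp hβmem
  have hD : (α 0 : ℝ) * (β 1 : ℝ) - (α 1 : ℝ) * (β 0 : ℝ) ≠ 0 := det_ne_zero_of_li α β hind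
  set D : ℝ := (α 0 : ℝ) * (β 1 : ℝ) - (α 1 : ℝ) * (β 0 : ℝ) with hD_def
  set w : ℝ := wt ξ α + wt ξ β - ξ.1 - ξ.2 with hw_def
  -- the master limit
  have master : ∀ σ : Fin 2 → ℝ,
      Tendsto (fun t : ℝ => t ^ (-w) * eval (fun j => σ j * t ^ xiv ξ j) (Jac f g)) atTop
        (𝓝 (a * b * D * σ 0 ^ (α 0 + β 0 - 1) * σ 1 ^ (α 1 + β 1 - 1))) := by
    intro σ
    have T1 := face_tendsto hαmem hαle hαlt σ 0
    have T2 := face_tendsto hβmem hβle hβlt σ 1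
    have T3 := face_tendsto hαmem hαle hαlt σ 1
    have T4 := face_tendsto hβmem hβle hβlt σ 0
    have Tc := (T1.mul T2).sub (T3.mul T4)
    -- value equality
    have s00 : ((α - Finsupp.single (0 : Fin 2) 1 : Fin 2 →₀ ℕ) 0) = α 0 - 1 := by
      simp [Finsupp.tsub_apply]
    have s01 : ((α - Finsupp.single (0 : Fin 2) 1 : Fin 2 →₀ ℕ) 1) = α 1 := by
      simp [Finsupp.tsub_apply, Finsupp.single_apply]
    have s10 : ((α - Finsupp.single (1 : Fin 2) 1 : Fin 2 →₀ ℕ) 0) = α 0 := by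
      simp [Finsupp.tsub_apply, Finsupp.single_apply]
    have s11 : ((α - Finsupp.single (1 : Fin 2) 1 : Fin 2 →₀ ℕ) 1) = α 1 - 1 := by
      simp [Finsupp.tsub_apply]
    have r00 : ((β - Finsupp.single (0 : Fin 2) 1 : Fin 2 →₀ ℕ) 0) = β 0 - 1 := by
      simp [Finsupp.tsub_apply]
    have r01 : ((β - Finsupp.single (0 : Fin 2) 1 : Fin 2 →₀ ℕ) 1) = β 1 := by
      simp [Finsupp.tsub_apply, Finsupp.single_apply]
    have r10 : ((β - Finsupp.single (1 : Fin 2) 1 : Fin 2 →₀ ℕ) 0) = β 0 := by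
      simp [Finsupp.tsub_apply, Finsupp.single_apply]
    have r11 : ((β - Finsupp.single (1 : Fin 2) 1 : Fin 2 →₀ ℕ) 1) = β 1 - 1 := by
      simp [Finsupp.tsub_apply]
    rw [s00, s01, s10, s11, r00, r01, r10, r11] at Tc
    have hval : a * (α 0 : ℝ) * σ 0 ^ (α 0 - 1) * σ 1 ^ (α 1) *
          (b * (β 1 : ℝ) * σ 0 ^ (β 0) * σ 1 ^ (β 1 - 1)) -
        a * (α 1 : ℝ) * σ 0 ^ (α 0) * σ 1 ^ (α 1 - 1) *
          (b * (β 0 : ℝ) * σ 0 ^ (β 0 - 1) * σ 1 ^ (β 1)) =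
        a * b * D * σ 0 ^ (α 0 + β 0 - 1) * σ 1 ^ (α 1 + β 1 - 1) := by
      have e1 : a * (α 0 : ℝ) * σ 0 ^ (α 0 - 1) * σ 1 ^ (α 1) *
          (b * (β 1 : ℝ) * σ 0 ^ (β 0) * σ 1 ^ (β 1 - 1)) =
          a * b * ((α 0 : ℝ) * β 1) * σ 0 ^ (α 0 + β 0 - 1) * σ 1 ^ (α 1 + β 1 - 1) := by
        rcases Nat.eq_zero_or_pos (α 0) with h|h
        · simp [h]
        rcases Nat.eq_zero_or_pos (β 1) with h'|h'
        · simp [h']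
        have p0 : σ 0 ^ (α 0 - 1) * σ 0 ^ (β 0) = σ 0 ^ (α 0 + β 0 - 1) := by
          rw [← pow_add]; congr 1; omega
        have p1 : σ 1 ^ (α 1) * σ 1 ^ (β 1 - 1) = σ 1 ^ (α 1 + β 1 - 1) := by
          rw [← pow_add]; congr 1; omega
        calc a * (α 0 : ℝ) * σ 0 ^ (α 0 - 1) * σ 1 ^ (α 1) *
            (b * (β 1 : ℝ) * σ 0 ^ (β 0) * σ 1 ^ (β 1 - 1))
            = a * b * ((α 0 : ℝ) * β 1) * (σ 0 ^ (α 0 - 1) * σ 0 ^ (β 0)) *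
              (σ 1 ^ (α 1) * σ 1 ^ (β 1 - 1)) := by ring
          _ = _ := by rw [p0, p1]
      have e2 : a * (α 1 : ℝ) * σ 0 ^ (α 0) * σ 1 ^ (α 1 - 1) *
          (b * (β 0 : ℝ) * σ 0 ^ (β 0 - 1) * σ 1 ^ (β 1)) =
          a * b * ((α 1 : ℝ) * β 0) * σ 0 ^ (α 0 + β 0 - 1) * σ 1 ^ (α 1 + β 1 - 1) := by
        rcases Nat.eq_zero_or_pos (α 1) with h|h
        · simp [h]
        rcases Nat.eq_zero_or_pos (β 0) with h'|h'
        · simp [h']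
        have p0 : σ 0 ^ (α 0) * σ 0 ^ (β 0 - 1) = σ 0 ^ (α 0 + β 0 - 1) := by
          rw [← pow_add]; congr 1; omega
        have p1 : σ 1 ^ (α 1 - 1) * σ 1 ^ (β 1) = σ 1 ^ (α 1 + β 1 - 1) := by
          rw [← pow_add]; congr 1; omega
        calc a * (α 1 : ℝ) * σ 0 ^ (α 0) * σ 1 ^ (α 1 - 1) *
            (b * (β 0 : ℝ) * σ 0 ^ (β 0 - 1) * σ 1 ^ (β 1))
            = a * b * ((α 1 : ℝ) * β 0) * (σ 0 ^ (α 0) * σ 0 ^ (β 0 - 1)) *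
              (σ 1 ^ (α 1 - 1) * σ 1 ^ (β 1)) := by ring
          _ = _ := by rw [p0, p1]
      rw [e1, e2, hD_def]; ring
    rw [hval] at Tc
    refine Tc.congr' ?_
    filter_upwards [eventually_gt_atTop 0] with t ht
    have hJ : eval (fun j => σ j * t ^ xiv ξ j) (Jac f g) =
        eval (fun j => σ j * t ^ xiv ξ j) (pderiv 0 f) *
          eval (fun j => σ j * t ^ xiv ξ j) (pderiv 1 g) -
        eval (fun j => σ j * t ^ xiv ξ j) (pderiv 1 f) *
          eval (fun j => σ j * t ^ xiv ξ j) (pderiv 0 g) := by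
      simp [Jac]
    rw [hJ]
    have hx0 : xiv ξ 0 = ξ.1 := rfl
    have hx1 : xiv ξ 1 = ξ.2 := rfl
    have hpq : t ^ (-(wt ξ α - xiv ξ 0)) * t ^ (-(wt ξ β - xiv ξ 1)) = t ^ (-w) := by
      rw [← Real.rpow_add ht, hx0, hx1, hw_def]; ring_nf
    have hrs : t ^ (-(wt ξ α - xiv ξ 1)) * t ^ (-(wt ξ β - xiv ξ 0)) = t ^ (-w) := by
      rw [← Real.rpow_add ht, hx0, hx1, hw_def]; ring_nf
    calc t ^ (-(wt ξ α - xiv ξ 0)) * eval (fun j => σ j * t ^ xiv ξ j) (pderiv 0 f) *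
          (t ^ (-(wt ξ β - xiv ξ 1)) * eval (fun j => σ j * t ^ xiv ξ j) (pderiv 1 g)) -
        t ^ (-(wt ξ α - xiv ξ 1)) * eval (fun j => σ j * t ^ xiv ξ j) (pderiv 1 f) *
          (t ^ (-(wt ξ β - xiv ξ 0)) * eval (fun j => σ j * t ^ xiv ξ j) (pderiv 0 g))
        = (t ^ (-(wt ξ α - xiv ξ 0)) * t ^ (-(wt ξ β - xiv ξ 1))) *
            (eval (fun j => σ j * t ^ xiv ξ j) (pderiv 0 f) *
             eval (fun j => σ j * t ^ xiv ξ j) (pderiv 1 g)) -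
          (t ^ (-(wt ξ α - xiv ξ 1)) * t ^ (-(wt ξ β - xiv ξ 0))) *
            (eval (fun j => σ j * t ^ xiv ξ j) (pderiv 1 f) *
             eval (fun j => σ j * t ^ xiv ξ j) (pderiv 0 g)) := by ring
      _ = _ := by rw [hpq, hrs]; ring
  -- extract sign witnesses
  have hfind : ∀ σ : Fin 2 → ℝ, ∀ L : ℝ,
      Tendsto (fun t : ℝ => t ^ (-w) * eval (fun j => σ j * t ^ xiv ξ j) (Jac f g)) atTop (𝓝 L) →
      (0 < L → ∃ p : Fin 2 → ℝ, 0 < eval p (Jac f g)) ∧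
      (L < 0 → ∃ q : Fin 2 → ℝ, eval q (Jac f g) < 0) := by
    intro σ L hT
    constructor
    · intro hL
      have h1 : ∀ᶠ t : ℝ in atTop,
          0 < t ^ (-w) * eval (fun j => σ j * t ^ xiv ξ j) (Jac f g) :=
        hT.eventually (eventually_gt_nhds hL)
      obtain ⟨t, hpos, ht⟩ := (h1.and (eventually_gt_atTop 0)).exists
      refine ⟨fun j => σ j * t ^ xiv ξ j, ?_⟩
      rcases mul_pos_iff.mp hpos with ⟨_, hE⟩ | ⟨hneg, _⟩
      · exact hE
      · exact absurd (Real.rpow_pos_of_pos ht (-w)) (by linarith)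
    · intro hL
      have h1 : ∀ᶠ t : ℝ in atTop,
          t ^ (-w) * eval (fun j => σ j * t ^ xiv ξ j) (Jac f g) < 0 :=
        hT.eventually (eventually_lt_nhds hL)
      obtain ⟨t, hneg, ht⟩ := (h1.and (eventually_gt_atTop 0)).exists
      refine ⟨fun j => σ j * t ^ xiv ξ j, ?_⟩
      rcases mul_neg_iff.mp hneg with ⟨_, hE⟩ | ⟨hc, _⟩
      · exact hE
      · exact absurd (Real.rpow_pos_of_pos ht (-w)) (by linarith)
  have habD : a * b * D ≠ 0 := mul_ne_zero (mul_ne_zero ha hb) hD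
  -- parity bookkeeping
  have h0pos : 1 ≤ α 0 + β 0 := by
    by_contra hc
    push_neg at hc
    have h1 : α 0 = 0 := by omega
    have h2 : β 0 = 0 := by omega
    exact hD (by rw [hD_def, h1, h2]; simp)
  have h1pos : 1 ≤ α 1 + β 1 := by
    by_contra hc
    push_neg at hc
    have h1 : α 1 = 0 := by omega
    have h2 : β 1 = 0 := by omega
    exact hD (by rw [hD_def, h1, h2]; simp)
  rcases heven with hev | hev
  · -- flip sign via σ 0
    have hodd : Odd (α 0 + β 0 - 1) := Nat.Even.sub_odd h0pos hev odd_one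
    have M1 := master ![1, 1]
    have M2 := master ![-1, 1]
    simp only [Matrix.cons_val_zero, Matrix.cons_val_one, Matrix.head_cons, one_pow, mul_one,
      hodd.neg_one_pow] at M1 M2
    have L1 := hfind ![1, 1] _ M1
    have L2 := hfind ![-1, 1] _ M2
    rcases habD.lt_or_gt with hd | hd
    · exact ⟨L2.1 (by linarith), L1.2 (by linarith)⟩
    · exact ⟨L1.1 (by linarith), L2.2 (by linarith)⟩
  · have hodd : Odd (α 1 + β 1 - 1) := Nat.Even.sub_odd h1pos hev odd_one
    have M1 := master ![1, 1]
    have M2 := master ![1, -1]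
    simp only [Matrix.cons_val_zero, Matrix.cons_val_one, Matrix.head_cons, one_pow, mul_one,
      hodd.neg_one_pow] at M1 M2
    have L1 := hfind ![1, 1] _ M1
    have L2 := hfind ![1, -1] _ M2
    rcases habD.lt_or_gt with hd | hd
    · exact ⟨L2.1 (by linarith), L1.2 (by linarith)⟩
    · exact ⟨L1.1 (by linarith), L2.2 (by linarith)⟩
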